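/- Let n = (n_1, ..., n_l) be nonnegative integers, not all zero, with gcd(n_1,...,n_l) = 1, and let |n| = n_1 + ... + n_l. Then for every positive integer k, the multinomial coefficient (k|n|)! / ((k n_1)! ⋯ (k n_l)!) is divisible by |n|. -/

import Mathlib

open Nat

lemma key_dvd {α : Type*} [DecidableEq α] (s : Finset α) (f : α → ℕ) (j : α) (hj : j ∈ s) :
    (∑ i ∈ s, f i) ∣ f j * Nat.multinomial s f := by
  rcases Nat.eq_zero_or_pos (f j) with h0 | hpos
  · simp [h0]
  set g : α → ℕ := Function.update f j (f j - 1) with hg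
  have hS : 0 < ∑ i ∈ s, f i := by
    calc 0 < f j := hpos
    _ ≤ ∑ i ∈ s, f i := Finset.single_le_sum (fun _ _ => Nat.zero_le _) hj
  have hsumg : ∑ i ∈ s, g i = (∑ i ∈ s, f i) - 1 := by
    rw [hg, Finset.sum_update_of_mem hj, Finset.sdiff_singleton_eq_erase, ← Finset.sum_erase_add s f hj]
    omega
  have hprod : ∏ i ∈ s, (f i)! = f j * ∏ i ∈ s, (g i)! := by
    rw [← Finset.mul_prod_erase s (fun i => (f i)!) hj,
        ← Finset.mul_prod_erase s (fun i => (g i)!) hj]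
    have he : ∏ i ∈ s.erase j, (g i)! = ∏ i ∈ s.erase j, (f i)! :=
      Finset.prod_congr rfl fun i hi => by
        rw [hg, Function.update_of_ne (Finset.ne_of_mem_erase hi)]
    have hgj : g j = f j - 1 := by rw [hg, Function.update_self]
    rw [he, hgj, ← mul_assoc, Nat.mul_factorial_pred hpos.ne']
  have hmain : f j * Nat.multinomial s f * ∏ i ∈ s, (g i)! =
      (∑ i ∈ s, f i) * Nat.multinomial s g * ∏ i ∈ s, (g i)! := by
    have h1 := Nat.multinomial_spec s f
    have h2 := Nat.multinomial_spec s g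
    rw [hsumg] at h2
    calc f j * Nat.multinomial s f * ∏ i ∈ s, (g i)!
        = Nat.multinomial s f * (f j * ∏ i ∈ s, (g i)!) := by ring
      _ = Nat.multinomial s f * ∏ i ∈ s, (f i)! := by rw [hprod]
      _ = (∑ i ∈ s, f i)! := by rw [mul_comm]; exact h1
      _ = (∑ i ∈ s, f i) * ((∑ i ∈ s, f i) - 1)! := (Nat.mul_factorial_pred hS.ne').symm
      _ = (∑ i ∈ s, f i) * Nat.multinomial s g * ∏ i ∈ s, (g i)! := by
          rw [mul_assoc, mul_comm (Nat.multinomial s g), h2]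
  have hne : 0 < ∏ i ∈ s, (g i)! := Finset.prod_pos fun i _ => Nat.factorial_pos _
  have := Nat.eq_of_mul_eq_mul_right hne hmain
  exact ⟨Nat.multinomial s g, this⟩

/-- If `n = (n_1,…,n_l)` are nonnegative integers, not all zero, with gcd `1`,
and `|n| = n_1 + ⋯ + n_l`, then for every positive integer `k` the multinomial
coefficient `(k|n|)! / ((k n_1)! ⋯ (k n_l)!)` is divisible by `|n|`. -/
theorem stmt1 (l : ℕ) (n : Fin l → ℕ) (hnz : ∃ j, n j ≠ 0)
    (hgcd : Finset.univ.gcd n = 1) (k : ℕ) (hk : 1 ≤ k) :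
    (∑ j, n j) ∣ Nat.multinomial Finset.univ (fun j => k * n j) := by
  set C := Nat.multinomial Finset.univ (fun j => k * n j) with hC
  have hdvd : ∀ j : Fin l, (∑ j, n j) ∣ n j * C := by
    intro j
    have h := key_dvd Finset.univ (fun j => k * n j) j (Finset.mem_univ j)
    rw [← Finset.mul_sum] at h
    have h2 : k * (∑ i, n i) ∣ k * n j * C := h
    rw [mul_assoc] at h2
    exact (mul_dvd_mul_iff_left (by omega : k ≠ 0)).mp h2
  have hg : (∑ j, n j) ∣ Finset.univ.gcd (fun j => n j * C) :=
    Finset.dvd_gcd fun j _ => hdvd j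
  simpa [Finset.gcd_mul_right, hgcd] using hg
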